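/- Let N ≥ 1, k ∈ {1,…,N}, and let α, γ ∈ ℝ with 0 < α < 1 and 0 < γ < 1. Let w_1,…,w_N ∈ ℝ satisfy w_j > 0 for all j and w̄ := Σ_{j=1}^N w_j < 1. Let x_{i−1} > 0 and define x_i := (x_{i−1}(1 − w̄))^α and x_{i+1} := (x_i(1 − w̄))^α (real powers). Then the Euler equation of agent k, namely −(x_i^{1/α − 1}/α)/(x_{i−1} − x_i^{1/α} − Σ_{j≠k} w_j x_{i−1}) + γ(1 − Σ_{j≠k} w_j)/(x_i − x_{i+1}^{1/α} − Σ_{j≠k} w_j x_i) = 0, holds if and only if αγ(1 + w_k − w̄) = 1 − w̄. -/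
import Mathlib


open Finset

/-- The Euler equation of agent `k` in the great fish war with linear policies
`π_j(x) = w_j x` holds along the closed-loop trajectory if and only if
`αγ(1 + w_k - w̄) = 1 - w̄` where `w̄ = ∑ j, w j`. -/
theorem fish_war_euler_iff (N : ℕ) (hN : 1 ≤ N) (k : Fin N) (α γ : ℝ)
    (hα0 : 0 < α) (hα1 : α < 1) (hγ0 : 0 < γ) (hγ1 : γ < 1)
    (w : Fin N → ℝ) (hw : ∀ j, 0 < w j) (hsum : ∑ j, w j < 1)
    (xm : ℝ) (hxm : 0 < xm) :
    (-(((xm * (1 - ∑ j, w j)) ^ α) ^ (1 / α - 1) / α) /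
        (xm - ((xm * (1 - ∑ j, w j)) ^ α) ^ (1 / α)
          - (∑ j ∈ Finset.univ.erase k, w j) * xm)
      + γ * (1 - ∑ j ∈ Finset.univ.erase k, w j) /
        ((xm * (1 - ∑ j, w j)) ^ α
          - ((((xm * (1 - ∑ j, w j)) ^ α) * (1 - ∑ j, w j)) ^ α) ^ (1 / α)
          - (∑ j ∈ Finset.univ.erase k, w j) * ((xm * (1 - ∑ j, w j)) ^ α)) = 0)
    ↔ α * γ * (1 + w k - ∑ j, w j) = 1 - ∑ j, w j := by
  set S : ℝ := ∑ j, w j with hS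
  set s : ℝ := ∑ j ∈ Finset.univ.erase k, w j with hs'
  have hsk : s + w k = S := Finset.sum_erase_add _ _ (Finset.mem_univ k)
  have hS1 : 0 < 1 - S := by linarith
  have hb : 0 < xm * (1 - S) := mul_pos hxm hS1
  set xi : ℝ := (xm * (1 - S)) ^ α with hxi
  have hxipos : 0 < xi := Real.rpow_pos_of_pos hb α
  have hαne : α ≠ 0 := ne_of_gt hα0
  have hroot : ∀ t : ℝ, 0 < t → ((t ^ α) ^ (1/α) : ℝ) = t := by
    intro t ht
    rw [← Real.rpow_mul ht.le, mul_one_div, div_self hαne, Real.rpow_one]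
  have h1 : (xi : ℝ) ^ (1/α) = xm * (1 - S) := hroot _ hb
  have h2 : ((xi * (1 - S)) ^ α) ^ (1/α) = xi * (1 - S) := hroot _ (mul_pos hxipos hS1)
  have h3 : xi ^ (1/α - 1) = xm * (1 - S) / xi := by
    rw [Real.rpow_sub hxipos, h1, Real.rpow_one]
  have hwk : 0 < w k := hw k
  rw [h1, h2, h3]
  have hden1 : xm - xm * (1 - S) - s * xm = xm * w k := by ring_nf; nlinarith [hsk]
  have hden2 : xi - xi * (1 - S) - s * xi = xi * w k := by ring_nf; nlinarith [hsk]
  rw [hden1, hden2]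
  have hkey : -(xm * (1 - S) / xi / α) / (xm * w k) + γ * (1 - s) / (xi * w k)
      = (α * γ * (1 + w k - S) - (1 - S)) / (α * xi * w k) := by
    have h1s : (1 : ℝ) - s = 1 + w k - S := by linarith
    rw [h1s]
    field_simp
    ring
  rw [hkey, div_eq_zero_iff, sub_eq_zero]
  constructor
  · rintro (h | h)
    · exact h
    · have hpos : 0 < α * xi * w k := by positivity
      exact absurd h hpos.ne'
  · exact fun h => Or.inl h
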